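/- Let V be a real inner product space, A : V → V a symmetric linear map with ⟪A v, v⟫ ≥ λ₁‖v‖² for all v ∈ V for some λ₁ > 0, f : [0,∞) → V continuous with ‖f(t)‖ ≤ F for all t ≥ 0, and let u : [0,∞) → V be continuously differentiable with u'(t) + (1 + ⟪A u(t), u(t)⟫) · A u(t) = f(t) for all t ≥ 0. Then for every α with 0 < α < λ₁/2, setting β = 1 − 2α/λ₁, for all t ≥ 0: ⟪A u(t), u(t)⟫ + β e^{−2αt} ∫₀ᵗ e^{2αs} ‖A u(s)‖² ds + 2 e^{−2αt} ∫₀ᵗ e^{2αs} ⟪A u(s), u(s)⟫ ‖A u(s)‖² ds ≤ e^{−2αt} ⟪A u(0), u(0)⟫ + (F²/(2α))(1 − e^{−2αt}). -/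

import Mathlib

open Set Real

/-- Lemma 3.1: exponentially weighted `H¹`-type a priori bound for the semidiscrete
Kirchhoff equation. -/
theorem semidiscrete_apriori_H1
    {V : Type*} [NormedAddCommGroup V] [InnerProductSpace ℝ V]
    (A : V →ₗ[ℝ] V)
    (hsymm : ∀ v w : V, (inner ℝ (A v) w : ℝ) = inner ℝ v (A w))
    (lambda1 : ℝ) (hlambda1 : 0 < lambda1)
    (hcoercive : ∀ v : V, (inner ℝ (A v) v : ℝ) ≥ lambda1 * ‖v‖ ^ 2)
    (f : ℝ → V) (hf_cont : ContinuousOn f (Ici 0))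
    (F : ℝ) (hF : ∀ t ∈ Ici (0 : ℝ), ‖f t‖ ≤ F)
    (u u' : ℝ → V)
    (hu'_cont : ContinuousOn u' (Ici 0))
    (hu_deriv : ∀ t ∈ Ici (0 : ℝ), HasDerivWithinAt u (u' t) (Ici 0) t)
    (heq : ∀ t ∈ Ici (0 : ℝ), u' t + (1 + (inner ℝ (A (u t)) (u t) : ℝ)) • A (u t) = f t)
    (α : ℝ) (hα : 0 < α) (halam : α < lambda1 / 2) (β : ℝ) (hβ : β = 1 - 2 * α / lambda1) :
    ∀ t ∈ Ici (0 : ℝ),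
      (inner ℝ (A (u t)) (u t) : ℝ)
          + β * exp (-2 * α * t) * (∫ s in (0 : ℝ)..t, exp (2 * α * s) * ‖A (u s)‖ ^ 2)
          + 2 * exp (-2 * α * t) *
              (∫ s in (0 : ℝ)..t,
                exp (2 * α * s) * (inner ℝ (A (u s)) (u s) : ℝ) * ‖A (u s)‖ ^ 2)
        ≤ exp (-2 * α * t) * (inner ℝ (A (u 0)) (u 0) : ℝ)
            + F ^ 2 / (2 * α) * (1 - exp (-2 * α * t)) := by
  -- Abbreviation for the quadratic form
  set E : ℝ → ℝ := fun s => (inner ℝ (A (u s)) (u s) : ℝ) with hE_def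
  have hE_nonneg : ∀ s, 0 ≤ E s := fun s =>
    le_trans (by positivity) (hcoercive (u s))
  have hE_pos : ∀ s, (0 : ℝ) < 1 + E s := fun s => by linarith [hE_nonneg s]
  -- From the equation: A (u t) = (1 + E t)⁻¹ • (f t - u' t) on Ici 0.
  have hAu : ∀ t ∈ Ici (0 : ℝ), (1 + E t) • A (u t) = f t - u' t := by
    intro t ht
    have h := heq t ht
    rw [← h]; abel
  have hu_cont : ContinuousOn u (Ici 0) := fun t ht =>
    (hu_deriv t ht).continuousWithinAt
  -- the retraction onto Ici 0
  set m : ℝ → ℝ := fun s => max s 0 with hm_def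
  have hm_cont : Continuous m := continuous_id.max continuous_const
  have hm_mem : ∀ s, m s ∈ Ici (0 : ℝ) := fun s => le_max_right s 0
  have hm_id : ∀ t ∈ Ici (0 : ℝ), m t = t := fun t ht => max_eq_left ht
  -- continuous extensions
  set g : ℝ → ℝ := fun s => (inner ℝ (f (m s) - u' (m s)) (u (m s)) : ℝ) with hg_def
  have hg_cont : Continuous g := by
    have hfm : Continuous fun s => f (m s) := hf_cont.comp_continuous hm_cont hm_mem
    have hu'm : Continuous fun s => u' (m s) := hu'_cont.comp_continuous hm_cont hm_mem
    have hum : Continuous fun s => u (m s) := hu_cont.comp_continuous hm_cont hm_mem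
    exact (hfm.sub hu'm).inner hum
  have hg_eq : ∀ s, g s = E (m s) * (1 + E (m s)) := by
    intro s
    have hms := hm_mem s
    have h := hAu (m s) hms
    simp only [hg_def]
    rw [← h, real_inner_smul_left]
    ring
  set Ec : ℝ → ℝ := fun s => (Real.sqrt (1 + 4 * g s) - 1) / 2 with hEc_def
  have hEc_eq : ∀ s, Ec s = E (m s) := by
    intro s
    have h1 : 1 + 4 * g s = (1 + 2 * E (m s)) ^ 2 := by rw [hg_eq s]; ring
    simp only [hEc_def]
    rw [h1, Real.sqrt_sq (by linarith [hE_nonneg (m s)])]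
    ring
  have hEc_cont : Continuous Ec := by
    apply Continuous.div_const
    exact (Real.continuous_sqrt.comp (continuous_const.add (continuous_const.mul hg_cont))).sub
      continuous_const
  have hEc_nonneg : ∀ s, 0 ≤ Ec s := fun s => (hEc_eq s) ▸ hE_nonneg (m s)
  have hEc_on : ∀ t ∈ Ici (0 : ℝ), Ec t = E t := fun t ht => by
    rw [hEc_eq t, hm_id t ht]
  set w : ℝ → V := fun s => (1 + Ec s)⁻¹ • (f (m s) - u' (m s)) with hw_def
  have hw_cont : Continuous w := by
    have hfm : Continuous fun s => f (m s) := hf_cont.comp_continuous hm_cont hm_mem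
    have hu'm : Continuous fun s => u' (m s) := hu'_cont.comp_continuous hm_cont hm_mem
    exact (((continuous_const.add hEc_cont).inv₀
      (fun s => ne_of_gt (by show (0:ℝ) < 1 + Ec s; linarith [hEc_nonneg s]))).smul (hfm.sub hu'm))
  have hw_on : ∀ t ∈ Ici (0 : ℝ), w t = A (u t) := by
    intro t ht
    have h := hAu t ht
    simp only [hw_def, hm_id t ht, hEc_on t ht, ← h]
    rw [smul_smul, inv_mul_cancel₀ (ne_of_gt (hE_pos t)), one_smul]
  -- key symmetric identity
  have hdiff : ∀ a b : V, (inner ℝ (A a) a : ℝ) - (inner ℝ (A b) b : ℝ)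
      = (inner ℝ (A a + A b) (a - b) : ℝ) := by
    intro a b
    rw [inner_add_left, inner_sub_right, inner_sub_right]
    have h1 : (inner ℝ (A b) a : ℝ) = inner ℝ (A a) b := by
      rw [hsymm b a, real_inner_comm]
    linarith
  -- derivative of Ec within Ici 0
  have hEc_deriv : ∀ t ∈ Ici (0 : ℝ),
      HasDerivWithinAt Ec (2 * (inner ℝ (w t) (u' t) : ℝ)) (Ici 0) t := by
    intro t ht
    rw [hasDerivWithinAt_iff_tendsto_slope]
    have hkey : ∀ᶠ s in nhdsWithin t (Ici 0 \ {t}),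
        (inner ℝ (w s + w t) (slope u t s) : ℝ) = slope Ec t s := by
      filter_upwards [self_mem_nhdsWithin] with s hs
      obtain ⟨hs0, _⟩ := hs
      have h1 : slope Ec t s = (s - t)⁻¹ * (Ec s - Ec t) := by
        simp [slope, vsub_eq_sub, smul_eq_mul]
      have h2 : Ec s - Ec t = (inner ℝ (A (u s) + A (u t)) (u s - u t) : ℝ) := by
        rw [hEc_on s hs0, hEc_on t ht]
        exact hdiff (u s) (u t)
      rw [h1, h2, hw_on s hs0, hw_on t ht]
      have : slope u t s = (s - t)⁻¹ • (u s - u t) := by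
        simp [slope, vsub_eq_sub]
      rw [this, real_inner_smul_right]
    apply Filter.Tendsto.congr' hkey
    have hwt : Filter.Tendsto (fun s => w s + w t) (nhdsWithin t (Ici 0 \ {t}))
        (nhds (w t + w t)) :=
      ((hw_cont.continuousAt.tendsto.mono_left nhdsWithin_le_nhds).add tendsto_const_nhds)
    have hst : Filter.Tendsto (slope u t) (nhdsWithin t (Ici 0 \ {t})) (nhds (u' t)) :=
      hasDerivWithinAt_iff_tendsto_slope.mp (hu_deriv t ht)
    have := Filter.Tendsto.inner (𝕜 := ℝ) hwt hst
    have heq2 : (2 : ℝ) * (inner ℝ (w t) (u' t) : ℝ) = (inner ℝ (w t + w t) (u' t) : ℝ) := by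
      rw [inner_add_left]; ring
    rw [heq2]
    exact this
  -- the integrand and the energy functional
  set φ : ℝ → ℝ := fun s => exp (2 * α * s) * ((β + 2 * Ec s) * ‖w s‖ ^ 2) with hφ_def
  have hφ_cont : Continuous φ := by
    have hexp2 : Continuous fun s : ℝ => exp (2 * α * s) :=
      Real.continuous_exp.comp (continuous_const.mul continuous_id)
    apply Continuous.mul hexp2
    exact ((continuous_const.add (continuous_const.mul hEc_cont)).mul
      ((hw_cont.norm).pow 2))
  set G : ℝ → ℝ := fun t => exp (2 * α * t) * Ec t + (∫ s in (0 : ℝ)..t, φ s)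
      - F ^ 2 / (2 * α) * (exp (2 * α * t) - 1) with hG_def
  set D : ℝ → ℝ := fun t => exp (2 * α * t) * (2 * α) * Ec t
      + exp (2 * α * t) * (2 * (inner ℝ (w t) (u' t) : ℝ)) + φ t
      - F ^ 2 / (2 * α) * (exp (2 * α * t) * (2 * α)) with hD_def
  have hexp : ∀ t : ℝ, HasDerivAt (fun s => exp (2 * α * s)) (exp (2 * α * t) * (2 * α)) t := by
    intro t
    simpa using ((hasDerivAt_id t).const_mul (2 * α)).exp
  have hG_deriv : ∀ t ∈ Ici (0 : ℝ), HasDerivWithinAt G (D t) (Ici 0) t := by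
    intro t ht
    have h1 : HasDerivWithinAt (fun s => exp (2 * α * s) * Ec s)
        (exp (2 * α * t) * (2 * α) * Ec t
          + exp (2 * α * t) * (2 * (inner ℝ (w t) (u' t) : ℝ))) (Ici 0) t :=
      ((hexp t).hasDerivWithinAt).mul (hEc_deriv t ht)
    have h2 : HasDerivWithinAt (fun s => ∫ x in (0 : ℝ)..s, φ x) (φ t) (Ici 0) t :=
      ((hφ_cont.integral_hasStrictDerivAt 0 t).hasDerivAt).hasDerivWithinAt
    have h3 : HasDerivWithinAt (fun s => F ^ 2 / (2 * α) * (exp (2 * α * s) - 1))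
        (F ^ 2 / (2 * α) * (exp (2 * α * t) * (2 * α))) (Ici 0) t :=
      (((hexp t).sub_const 1).const_mul (F ^ 2 / (2 * α))).hasDerivWithinAt
    exact (h1.add h2).sub h3
  -- coercivity consequence: lambda1 * E ≤ ‖A v‖²
  have hcoer2 : ∀ v : V, lambda1 * (inner ℝ (A v) v : ℝ) ≤ ‖A v‖ ^ 2 := by
    intro v
    have h1 : lambda1 * ‖v‖ ^ 2 ≤ (inner ℝ (A v) v : ℝ) := hcoercive v
    have h2 : (inner ℝ (A v) v : ℝ) ≤ ‖A v‖ * ‖v‖ := real_inner_le_norm (A v) v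
    nlinarith [norm_nonneg v, norm_nonneg (A v), sq_nonneg (‖A v‖ - lambda1 * ‖v‖),
      mul_nonneg (norm_nonneg (A v)) (norm_nonneg v)]
  have hF0 : (0 : ℝ) ≤ F := le_trans (norm_nonneg (f 0)) (hF 0 Set.self_mem_Ici)
  -- the derivative is nonpositive
  have hD_nonpos : ∀ t ∈ Ici (0 : ℝ), D t ≤ 0 := by
    intro t ht
    have hu'eq : u' t = f t - (1 + E t) • w t := by
      rw [hw_on t ht]
      have h := heq t ht
      rw [← h]; abel
    have hinner : (inner ℝ (w t) (u' t) : ℝ)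
        = (inner ℝ (w t) (f t) : ℝ) - (1 + E t) * ‖w t‖ ^ 2 := by
      rw [hu'eq, inner_sub_right, real_inner_smul_right, real_inner_self_eq_norm_sq]
    have hcoe : lambda1 * E t ≤ ‖w t‖ ^ 2 := by
      rw [hw_on t ht]; exact hcoer2 (u t)
    have hwf : (inner ℝ (w t) (f t) : ℝ) ≤ ‖w t‖ * F := by
      calc (inner ℝ (w t) (f t) : ℝ) ≤ ‖w t‖ * ‖f t‖ := real_inner_le_norm _ _
        _ ≤ ‖w t‖ * F := mul_le_mul_of_nonneg_left (hF t ht) (norm_nonneg _)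
    have hepos : (0 : ℝ) < exp (2 * α * t) := exp_pos _
    have hEct : Ec t = E t := hEc_on t ht
    have hbracket : 2 * α * E t + 2 * (inner ℝ (w t) (u' t) : ℝ)
        + (β + 2 * E t) * ‖w t‖ ^ 2 - F ^ 2 ≤ 0 := by
      rw [hinner, hβ]
      have h2a : 2 * α / lambda1 * (lambda1 * E t) ≤ 2 * α / lambda1 * ‖w t‖ ^ 2 :=
        mul_le_mul_of_nonneg_left hcoe (by positivity)
      have h2a' : 2 * α / lambda1 * (lambda1 * E t) = 2 * α * E t := by
        field_simp
      have hsq : 2 * (‖w t‖ * F) ≤ ‖w t‖ ^ 2 + F ^ 2 := by nlinarith [sq_nonneg (‖w t‖ - F)]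
      nlinarith [hwf]
    have hDform : D t = exp (2 * α * t) * (2 * α * E t + 2 * (inner ℝ (w t) (u' t) : ℝ)
        + (β + 2 * E t) * ‖w t‖ ^ 2 - F ^ 2) := by
      simp only [hD_def, hφ_def, hEct]
      field_simp
    rw [hDform]
    exact mul_nonpos_of_nonneg_of_nonpos (le_of_lt hepos) hbracket
  -- G is antitone on Ici 0
  have hG_anti : AntitoneOn G (Ici 0) := by
    apply antitoneOn_of_deriv_nonpos (convex_Ici 0)
    · intro t ht; exact (hG_deriv t ht).continuousWithinAt
    · intro t ht
      rw [interior_Ici] at ht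
      exact ((hG_deriv t (mem_Ici.mpr (le_of_lt ht))).hasDerivAt (Ici_mem_nhds ht)).differentiableAt.differentiableWithinAt
    · intro t ht
      rw [interior_Ici] at ht
      rw [((hG_deriv t (mem_Ici.mpr (le_of_lt ht))).hasDerivAt (Ici_mem_nhds ht)).deriv]
      exact hD_nonpos t (mem_Ici.mpr (le_of_lt ht))
  have hG0 : G 0 = Ec 0 := by
    simp [hG_def]
  -- conclusion
  intro t ht
  have hGt : G t ≤ Ec 0 := hG0 ▸ hG_anti (self_mem_Ici) ht ht
  -- rewrite the integrals
  have hIcc : uIcc (0 : ℝ) t = Icc 0 t := uIcc_of_le ht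
  have hI1 : (∫ s in (0 : ℝ)..t, exp (2 * α * s) * ‖A (u s)‖ ^ 2)
      = ∫ s in (0 : ℝ)..t, exp (2 * α * s) * ‖w s‖ ^ 2 := by
    apply intervalIntegral.integral_congr
    intro s hs
    rw [hIcc] at hs
    simp only [hw_on s hs.1]
  have hI2 : (∫ s in (0 : ℝ)..t, exp (2 * α * s) * (inner ℝ (A (u s)) (u s) : ℝ) * ‖A (u s)‖ ^ 2)
      = ∫ s in (0 : ℝ)..t, exp (2 * α * s) * Ec s * ‖w s‖ ^ 2 := by
    apply intervalIntegral.integral_congr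
    intro s hs
    rw [hIcc] at hs
    simp only [hw_on s hs.1, hEc_on s hs.1]
    rfl
  have hsplit : (∫ s in (0 : ℝ)..t, φ s)
      = β * (∫ s in (0 : ℝ)..t, exp (2 * α * s) * ‖w s‖ ^ 2)
        + 2 * (∫ s in (0 : ℝ)..t, exp (2 * α * s) * Ec s * ‖w s‖ ^ 2) := by
    rw [← intervalIntegral.integral_const_mul, ← intervalIntegral.integral_const_mul,
      ← intervalIntegral.integral_add]
    · apply intervalIntegral.integral_congr
      intro s _
      simp only [hφ_def]
      ring
    · have hexp2 : Continuous fun s : ℝ => exp (2 * α * s) :=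
        Real.continuous_exp.comp (continuous_const.mul continuous_id)
      exact Continuous.intervalIntegrable
        (continuous_const.mul (hexp2.mul ((hw_cont.norm).pow 2))) 0 t
    · have hexp2 : Continuous fun s : ℝ => exp (2 * α * s) :=
        Real.continuous_exp.comp (continuous_const.mul continuous_id)
      exact Continuous.intervalIntegrable
        (continuous_const.mul ((hexp2.mul hEc_cont).mul ((hw_cont.norm).pow 2))) 0 t
  set I1 := ∫ s in (0 : ℝ)..t, exp (2 * α * s) * ‖w s‖ ^ 2 with hI1_def
  set I2 := ∫ s in (0 : ℝ)..t, exp (2 * α * s) * Ec s * ‖w s‖ ^ 2 with hI2_def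
  have hkey : exp (-2 * α * t) * exp (2 * α * t) = 1 := by
    rw [← exp_add]; ring_nf; exact exp_zero
  have hE0 : Ec 0 = (inner ℝ (A (u 0)) (u 0) : ℝ) := hEc_on 0 Set.self_mem_Ici
  have hEt : Ec t = E t := hEc_on t ht
  rw [hI1, hI2]
  have hGt' : exp (2 * α * t) * Ec t + (β * I1 + 2 * I2)
      - F ^ 2 / (2 * α) * (exp (2 * α * t) - 1) ≤ Ec 0 := by
    have := hGt
    rw [hG_def] at this
    simpa [hsplit] using this
  have hmul := mul_le_mul_of_nonneg_left hGt' (le_of_lt (exp_pos (-2 * α * t)))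
  have hfinal : E t + β * exp (-2 * α * t) * I1 + 2 * exp (-2 * α * t) * I2
      ≤ exp (-2 * α * t) * (inner ℝ (A (u 0)) (u 0) : ℝ)
        + F ^ 2 / (2 * α) * (1 - exp (-2 * α * t)) := by
    rw [← hE0, ← hEt]
    have hexpand : exp (-2 * α * t) * (exp (2 * α * t) * Ec t + (β * I1 + 2 * I2)
          - F ^ 2 / (2 * α) * (exp (2 * α * t) - 1))
        = Ec t + β * exp (-2 * α * t) * I1 + 2 * exp (-2 * α * t) * I2
          - F ^ 2 / (2 * α) * (1 - exp (-2 * α * t)) := by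
      linear_combination (Ec t - F ^ 2 / (2 * α)) * hkey
    linarith [hmul, hexpand.symm.le]
  exact hfinal
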